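/- If f, g ∈ 𝕋[x_1,…,x_n] are nonzero polynomials that are equivalent (f ∼ g), then their total degrees are equal and their lower degrees are equal, where the lower degree of a nonzero polynomial is the minimum of the total degrees of the monomials in its support. -/

import Mathlib

/-- The extended tropical semiring `𝕋`: tangible reals `(a, false)`,
ghost reals `(a, true)`, and `none` = `-∞`. -/
abbrev T : Type := Option (ℝ × Bool)

namespace T

/-- The tangible element of value `a`. -/
def tang (a : ℝ) : T := some (a, false)

/-- The ghost element `a^ν` of value `a`. -/
def ghost (a : ℝ) : T := some (a, true)

/-- Tropical addition on `𝕋`. -/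
noncomputable def add : T → T → T
  | none, y => y
  | some p, none => some p
  | some (a, s), some (b, t) =>
      if a < b then some (b, t) else if b < a then some (a, s) else some (a, true)

/-- Tropical multiplication on `𝕋`. -/
noncomputable def mul : T → T → T
  | none, _ => none
  | some _, none => none
  | some (a, s), some (b, t) => some (a + b, s || t)

lemma add_assoc' : ∀ x y z : T, add (add x y) z = add x (add y z) := by
  rintro (_ | ⟨a, s⟩) (_ | ⟨b, t⟩) (_ | ⟨c, u⟩) <;>
    simp only [add] <;>
    (try split_ifs) <;>
    simp only [add] <;>
    (try split_ifs) <;>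
    first
      | rfl
      | (exfalso; linarith)
      | (refine congrArg some ?_; refine Prod.ext ?_ ?_ <;>
          first | rfl | linarith | simp)

lemma add_comm' : ∀ x y : T, add x y = add y x := by
  rintro (_ | ⟨a, s⟩) (_ | ⟨b, t⟩) <;>
    simp only [add] <;>
    (try split_ifs) <;>
    first
      | rfl
      | (exfalso; linarith)
      | (refine congrArg some ?_; refine Prod.ext ?_ ?_ <;>
          first | rfl | linarith | simp)

lemma mul_assoc' : ∀ x y z : T, mul (mul x y) z = mul x (mul y z) := by
  rintro (_ | ⟨a, s⟩) (_ | ⟨b, t⟩) (_ | ⟨c, u⟩) <;>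
    simp [mul, add_assoc, Bool.or_assoc]

lemma mul_comm' : ∀ x y : T, mul x y = mul y x := by
  rintro (_ | ⟨a, s⟩) (_ | ⟨b, t⟩) <;> simp [mul, add_comm, Bool.or_comm]

lemma left_distrib' : ∀ x y z : T, mul x (add y z) = add (mul x y) (mul x z) := by
  rintro (_ | ⟨a, s⟩) (_ | ⟨b, t⟩) (_ | ⟨c, u⟩) <;>
    simp only [add, mul] <;>
    (try split_ifs) <;>
    simp only [add, mul] <;>
    (try split_ifs) <;>
    first
      | rfl
      | (exfalso; linarith)
      | (refine congrArg some ?_; refine Prod.ext ?_ ?_ <;>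
          first | rfl | linarith | simp)

noncomputable instance : Zero T := ⟨none⟩
noncomputable instance : One T := ⟨some (0, false)⟩
noncomputable instance : Add T := ⟨add⟩
noncomputable instance : Mul T := ⟨mul⟩

noncomputable instance : CommSemiring T where
  add := (· + ·)
  zero := 0
  add_assoc := add_assoc'
  zero_add := fun x => by cases x <;> rfl
  add_zero := fun x => by cases x <;> rfl
  add_comm := add_comm'
  mul := (· * ·)
  one := 1
  mul_assoc := mul_assoc'
  one_mul := fun x => by
    show mul (some (0, false)) x = x
    rcases x with _ | ⟨a, s⟩ <;> simp [mul]
  mul_one := fun x => by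
    show mul x (some (0, false)) = x
    rcases x with _ | ⟨a, s⟩ <;> simp [mul]
  mul_comm := mul_comm'
  zero_mul := fun x => by cases x <;> rfl
  mul_zero := fun x => by cases x <;> rfl
  left_distrib := left_distrib'
  right_distrib := fun x y z => by
    show mul (add x y) z = add (mul x z) (mul y z)
    rw [mul_comm', left_distrib', mul_comm' z x, mul_comm' z y]
  nsmul := nsmulRec

/-- Membership in the ghost part `𝕌̄ = 𝕌 ∪ {-∞}` of `𝕋`. -/
def isGhost : T → Prop
  | none => True
  | some (_, s) => s = true

/-- Membership in the tangible part `ℝ ∪ {-∞}` of `𝕋`. -/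
def isTangible : T → Prop
  | none => True
  | some (_, s) => s = false

/-- The underlying real value (junk value `0` at `-∞`); this is `π` on elements `≠ -∞`. -/
def val : T → ℝ
  | none => 0
  | some (a, _) => a

/-- The ghost map `ν`. -/
def nu : T → T
  | none => none
  | some (a, _) => some (a, true)

end T

namespace T

/-- The model value in the half line `[0,∞)`: `-∞ ↦ 0`, an element of value `a ↦ exp a`. -/
noncomputable def gval : T → ℝ
  | none => 0
  | some (a, _) => Real.exp a

lemma nu_isGhost : ∀ x : T, isGhost (nu x)
  | none => trivial
  | some (_, _) => rfl

lemma gval_injOn_tang : Set.InjOn gval {x : T | isTangible x} := by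
  rintro (_ | ⟨a, s⟩) hx (_ | ⟨b, t⟩) hy h <;>
    simp only [gval, Set.mem_setOf_eq, isTangible] at hx hy h
  · rfl
  · exact absurd h.symm (Real.exp_pos b).ne'
  · exact absurd h (Real.exp_pos a).ne'
  · rw [Real.exp_eq_exp] at h; subst hx; subst hy; subst h; rfl

lemma gval_injOn_ghost : Set.InjOn gval {x : T | isGhost x} := by
  rintro (_ | ⟨a, s⟩) hx (_ | ⟨b, t⟩) hy h <;>
    simp only [gval, Set.mem_setOf_eq, isGhost] at hx hy h
  · rfl
  · exact absurd h.symm (Real.exp_pos b).ne'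
  · exact absurd h (Real.exp_pos a).ne'
  · rw [Real.exp_eq_exp] at h; subst hx; subst hy; subst h; rfl

lemma gval_image_tang : gval '' {x : T | isTangible x} = Set.Ici 0 := by
  ext y
  constructor
  · rintro ⟨(_ | ⟨a, s⟩), hx, rfl⟩
    · exact Set.self_mem_Ici
    · exact le_of_lt (by simpa [gval] using Real.exp_pos a)
  · intro hy
    rcases eq_or_lt_of_le (Set.mem_Ici.mp hy : (0 : ℝ) ≤ y) with h | h
    · exact ⟨none, trivial, h⟩
    · exact ⟨some (Real.log y, false), rfl, by simp [gval, Real.exp_log h]⟩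

lemma gval_image_ghost : gval '' {x : T | isGhost x} = Set.Ici 0 := by
  ext y
  constructor
  · rintro ⟨(_ | ⟨a, s⟩), hx, rfl⟩
    · exact Set.self_mem_Ici
    · exact le_of_lt (by simpa [gval] using Real.exp_pos a)
  · intro hy
    rcases eq_or_lt_of_le (Set.mem_Ici.mp hy : (0 : ℝ) ≤ y) with h | h
    · exact ⟨none, trivial, h⟩
    · exact ⟨some (Real.log y, true), rfl, by simp [gval, Real.exp_log h]⟩

/-- The closed sets of the topology on `𝕋`: both the tangible and the ghost layers are
closed in the model `[0,∞)` of `𝕌̄`, and the ghost image of the tangible layer is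
contained in the set. -/
def TIsClosed (W : Set T) : Prop :=
  IsClosed (gval '' (W ∩ {x | isTangible x})) ∧
  IsClosed (gval '' (W ∩ {x | isGhost x})) ∧
  nu '' (W ∩ {x | isTangible x}) ⊆ W ∩ {x | isGhost x}

/-- The topology on `𝕋`. -/
noncomputable instance : TopologicalSpace T :=
  TopologicalSpace.ofClosed {W | TIsClosed W}
    (by
      refine ⟨?_, ?_, ?_⟩ <;> simp [TIsClosed])
    (fun A hA => by
      rcases A.eq_empty_or_nonempty with rfl | hne
      · rw [Set.sInter_empty]
        refine ⟨?_, ?_, ?_⟩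
        · rw [Set.univ_inter, gval_image_tang]; exact isClosed_Ici
        · rw [Set.univ_inter, gval_image_ghost]; exact isClosed_Ici
        · rintro y ⟨x, ⟨-, _⟩, rfl⟩
          exact ⟨trivial, nu_isGhost x⟩
      · have : Nonempty A := hne.to_subtype
        have h1 : (⋂₀ A) ∩ {x : T | isTangible x}
            = ⋂ (W : A), ((W : Set T) ∩ {x | isTangible x}) := by
          ext x
          simp only [Set.mem_inter_iff, Set.mem_sInter, Set.mem_iInter, Set.mem_setOf_eq]
          constructor
          · rintro ⟨h, ht⟩ W; exact ⟨h W W.2, ht⟩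
          · intro h
            obtain ⟨W, hW⟩ := hne
            exact ⟨fun V hV => (h ⟨V, hV⟩).1, (h ⟨W, hW⟩).2⟩
        have h2 : (⋂₀ A) ∩ {x : T | isGhost x}
            = ⋂ (W : A), ((W : Set T) ∩ {x | isGhost x}) := by
          ext x
          simp only [Set.mem_inter_iff, Set.mem_sInter, Set.mem_iInter, Set.mem_setOf_eq]
          constructor
          · rintro ⟨h, ht⟩ W; exact ⟨h W W.2, ht⟩
          · intro h
            obtain ⟨W, hW⟩ := hne
            exact ⟨fun V hV => (h ⟨V, hV⟩).1, (h ⟨W, hW⟩).2⟩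
        refine ⟨?_, ?_, ?_⟩
        · rw [h1, Set.InjOn.image_iInter_eq
            (gval_injOn_tang.mono (Set.iUnion_subset fun W => Set.inter_subset_right))]
          exact isClosed_iInter fun W => (hA W.2).1
        · rw [h2, Set.InjOn.image_iInter_eq
            (gval_injOn_ghost.mono (Set.iUnion_subset fun W => Set.inter_subset_right))]
          exact isClosed_iInter fun W => (hA W.2).2.1
        · rintro y ⟨x, ⟨hx, hxt⟩, rfl⟩
          refine ⟨fun W hW => ((hA hW).2.2 ⟨x, ⟨hx W hW, hxt⟩, rfl⟩).1, nu_isGhost x⟩)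
    (fun A hA B hB => by
      have h1 : (A ∪ B) ∩ {x : T | isTangible x}
          = (A ∩ {x | isTangible x}) ∪ (B ∩ {x | isTangible x}) :=
        Set.union_inter_distrib_right A B _
      have h2 : (A ∪ B) ∩ {x : T | isGhost x}
          = (A ∩ {x | isGhost x}) ∪ (B ∩ {x | isGhost x}) :=
        Set.union_inter_distrib_right A B _
      refine ⟨?_, ?_, ?_⟩
      · rw [h1, Set.image_union]; exact hA.1.union hB.1
      · rw [h2, Set.image_union]; exact hA.2.1.union hB.2.1
      · rintro y ⟨x, ⟨hx, hxt⟩, rfl⟩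
        rcases hx with hxA | hxB
        · have h := hA.2.2 ⟨x, ⟨hxA, hxt⟩, rfl⟩
          exact ⟨Or.inl h.1, h.2⟩
        · have h := hB.2.2 ⟨x, ⟨hxB, hxt⟩, rfl⟩
          exact ⟨Or.inr h.1, h.2⟩)

end T

namespace TAux
open T

lemma add_ne_zero {x y : T} (hx : x ≠ (0 : T)) : x + y ≠ 0 := by
  rcases x with _ | ⟨a, s⟩
  · exact absurd rfl hx
  · rcases y with _ | ⟨b, t⟩
    · exact hx
    · show add _ _ ≠ _
      simp only [add]
      split_ifs <;> exact Option.some_ne_none _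

lemma val_add {x y : T} (hx : x ≠ (0 : T)) (hy : y ≠ (0 : T)) :
    val (x + y) = max (val x) (val y) := by
  rcases x with _ | ⟨a, s⟩
  · exact absurd rfl hx
  rcases y with _ | ⟨b, t⟩
  · exact absurd rfl hy
  show val (add _ _) = _
  simp only [add]
  split_ifs with h1 h2 <;> simp only [val]
  · exact (max_eq_right h1.le).symm
  · exact (max_eq_left h2.le).symm
  · exact (max_eq_left (le_of_not_gt h1)).symm

lemma sum_ne_zero_and_val {ι : Type*} (s : Finset ι) (hs : s.Nonempty) (F : ι → T)
    (hF : ∀ i ∈ s, F i ≠ 0) :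
    (∑ i ∈ s, F i) ≠ 0 ∧ val (∑ i ∈ s, F i) = s.sup' hs (fun i => val (F i)) := by
  induction hs using Finset.Nonempty.cons_induction with
  | singleton a => simpa using hF a (by simp)
  | cons a s ha hs ih =>
    rw [Finset.sum_cons, Finset.sup'_cons]
    have hFa : F a ≠ 0 := hF a (Finset.mem_cons_self a s)
    obtain ⟨h1, h2⟩ := ih (fun i hi => hF i (Finset.mem_cons_of_mem hi))
    refine ⟨add_ne_zero hFa, ?_⟩
    rw [val_add hFa h1, h2]

lemma tang_pow (c : ℝ) (k : ℕ) : (tang c) ^ k = tang (k * c) := by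
  induction k with
  | zero => simp only [pow_zero, Nat.cast_zero, zero_mul]; rfl
  | succ k ih =>
    rw [pow_succ, ih]
    have hcast : ((k+1 : ℕ):ℝ) * c = (k:ℝ) * c + c := by push_cast; ring
    rw [hcast]
    rfl

lemma prod_tang {ι : Type*} (s : Finset ι) (r : ι → ℝ) :
    (∏ i ∈ s, tang (r i)) = tang (∑ i ∈ s, r i) := by
  induction s using Finset.cons_induction with
  | empty => rfl
  | cons a s ha ih =>
    rw [Finset.prod_cons, Finset.sum_cons, ih]
    rfl

lemma mem_supp_val {n : ℕ} (f : MvPolynomial (Fin n) T) {m : Fin n →₀ ℕ}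
    (hm : m ∈ f.support) : ∃ b s, f.coeff m = some (b, s) := by
  have hne := MvPolynomial.mem_support_iff.mp hm
  rcases hc : f.coeff m with _ | ⟨b, s⟩
  · exact absurd hc hne
  · exact ⟨b, s, rfl⟩

lemma eval_const_val {n : ℕ} (f : MvPolynomial (Fin n) T) (hf : f ≠ 0) (c : ℝ) :
    MvPolynomial.eval (fun _ => tang c) f ≠ 0 ∧
      val (MvPolynomial.eval (fun _ => tang c) f) =
        f.support.sup' (MvPolynomial.support_nonempty.mpr hf)
          (fun m => val (f.coeff m) + c * (m.sum fun _ e => e)) := by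
  have hs := MvPolynomial.support_nonempty.mpr hf
  rw [MvPolynomial.eval_eq']
  have key : ∀ m ∈ f.support,
      f.coeff m * ∏ i, (fun _ : Fin n => tang c) i ^ m i ≠ 0 ∧
      val (f.coeff m * ∏ i, (fun _ : Fin n => tang c) i ^ m i)
        = val (f.coeff m) + c * (m.sum fun _ e => e) := by
    intro m hm
    obtain ⟨b, s, hbs⟩ := mem_supp_val f hm
    have hprod : (∏ i, (fun _ : Fin n => tang c) i ^ m i)
        = tang ((m.sum fun _ e => e : ℕ) * c) := by
      have h1 : ∀ i : Fin n, (fun _ : Fin n => tang c) i ^ m i = tang ((m i : ℝ) * c) :=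
        fun i => tang_pow c (m i)
      rw [Finset.prod_congr rfl (fun i _ => h1 i), prod_tang]
      congr 1
      rw [Finsupp.sum_fintype _ _ (fun _ => rfl)]
      push_cast
      rw [Finset.sum_mul]
    rw [hbs, hprod]
    refine ⟨Option.some_ne_none _, ?_⟩
    show val (some (b + _, _)) = _
    simp only [val]
    ring
  obtain ⟨h1, h2⟩ := sum_ne_zero_and_val f.support hs _ (fun m hm => (key m hm).1)
  refine ⟨h1, ?_⟩
  rw [h2]
  exact Finset.sup'_congr hs rfl (fun m hm => (key m hm).2)

lemma env_sup_le {ι κ : Type*} (S : Finset ι) (S' : Finset κ)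
    (hS : S.Nonempty) (hS' : S'.Nonempty) (b : ι → ℝ) (b' : κ → ℝ) (d : ι → ℕ) (d' : κ → ℕ)
    (h : ∀ c : ℝ, S.sup' hS (fun m => b m + c * d m) = S'.sup' hS' (fun m => b' m + c * d' m)) :
    S.sup' hS d ≤ S'.sup' hS' d' := by
  by_contra hlt
  push_neg at hlt
  obtain ⟨m0, hm0, hd0⟩ := Finset.exists_mem_eq_sup' hS d
  set D : ℕ := S.sup' hS d with hD
  set D' : ℕ := S'.sup' hS' d' with hD'
  set B' : ℝ := S'.sup' hS' b' with hB'
  set c : ℝ := max 0 (B' - b m0 + 1) with hc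
  have hc0 : (0:ℝ) ≤ c := le_max_left _ _
  have hc1 : B' - b m0 + 1 ≤ c := le_max_right _ _
  have hL : b m0 + c * D ≤ S.sup' hS (fun m => b m + c * d m) := by
    have h0 := Finset.le_sup' (fun m => b m + c * (d m : ℝ)) hm0
    rw [← hd0] at h0
    exact h0
  obtain ⟨m1, hm1, hEq⟩ := Finset.exists_mem_eq_sup' hS' (fun m => b' m + c * (d' m : ℝ))
  have hb1 : b' m1 ≤ B' := Finset.le_sup' b' hm1
  have hd1 : (d' m1 : ℝ) ≤ (D' : ℝ) := by exact_mod_cast Finset.le_sup' d' hm1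
  have hR : S'.sup' hS' (fun m => b' m + c * d' m) ≤ B' + c * D' := by
    rw [hEq]
    have := mul_le_mul_of_nonneg_left hd1 hc0
    linarith
  have hDD : (D' : ℝ) + 1 ≤ (D : ℝ) := by exact_mod_cast hlt
  have hcD : c * ((D':ℝ) + 1) ≤ c * D := mul_le_mul_of_nonneg_left hDD hc0
  have hexp : c * ((D':ℝ) + 1) = c * D' + c := by ring
  have hmain := h c
  linarith

lemma env_inf_le {ι κ : Type*} (S : Finset ι) (S' : Finset κ)
    (hS : S.Nonempty) (hS' : S'.Nonempty) (b : ι → ℝ) (b' : κ → ℝ) (d : ι → ℕ) (d' : κ → ℕ)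
    (h : ∀ c : ℝ, S.sup' hS (fun m => b m + c * d m) = S'.sup' hS' (fun m => b' m + c * d' m)) :
    S.inf' hS d ≤ S'.inf' hS' d' := by
  by_contra hlt
  push_neg at hlt
  obtain ⟨m0, hm0, hd0⟩ := Finset.exists_mem_eq_inf' hS' d'
  set e : ℕ := S.inf' hS d with he
  set e' : ℕ := S'.inf' hS' d' with he'
  set B : ℝ := S.sup' hS b with hB
  set c : ℝ := min 0 (b' m0 - B - 1) with hc
  have hc0 : c ≤ (0:ℝ) := min_le_left _ _
  have hc1 : c ≤ b' m0 - B - 1 := min_le_right _ _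
  have hR : b' m0 + c * e' ≤ S'.sup' hS' (fun m => b' m + c * (d' m : ℝ)) := by
    have h0 := Finset.le_sup' (fun m => b' m + c * (d' m : ℝ)) hm0
    rw [← hd0] at h0
    exact h0
  obtain ⟨m1, hm1, hEq⟩ := Finset.exists_mem_eq_sup' hS (fun m => b m + c * (d m : ℝ))
  have hb1 : b m1 ≤ B := Finset.le_sup' b hm1
  have hd1 : (e' : ℝ) + 1 ≤ (d m1 : ℝ) := by
    have h1 : e ≤ d m1 := Finset.inf'_le d hm1
    have h2 : e' + 1 ≤ e := hlt
    exact_mod_cast le_trans h2 h1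
  have hcd : c * (d m1 : ℝ) ≤ c * ((e':ℝ) + 1) := mul_le_mul_of_nonpos_left hd1 hc0
  have hL : S.sup' hS (fun m => b m + c * (d m : ℝ)) ≤ B + c * e' + c := by
    rw [hEq]
    have hexp : c * ((e':ℝ) + 1) = c * e' + c := by ring
    linarith
  have hmain := h c
  linarith

lemma sInf_image_eq_inf' {ι : Type*} (s : Finset ι) (hs : s.Nonempty) (g : ι → ℕ) :
    sInf (g '' ↑s) = s.inf' hs g := by
  apply le_antisymm
  · obtain ⟨m, hm, hEq⟩ := Finset.exists_mem_eq_inf' hs g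
    rw [hEq]
    exact Nat.sInf_le ⟨m, hm, rfl⟩
  · have hne : (g '' ↑s).Nonempty := ⟨g hs.choose, hs.choose, hs.choose_spec, rfl⟩
    obtain ⟨m, hm, hEq⟩ := Nat.sInf_mem hne
    rw [← hEq]
    exact Finset.inf'_le g hm

end TAux

/-- equivalent nonzero polynomials have the same total degree and the
same lower degree (the minimum of the total degrees of the monomials in the support). -/
theorem tropical_equiv_deg_eq (n : ℕ) (f g : MvPolynomial (Fin n) T)
    (hf : f ≠ 0) (hg : g ≠ 0)
    (h : ∀ a : Fin n → T, MvPolynomial.eval a f = MvPolynomial.eval a g) :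
    f.totalDegree = g.totalDegree ∧
      sInf ((fun m : Fin n →₀ ℕ => m.sum fun _ e => e) '' ↑f.support)
        = sInf ((fun m : Fin n →₀ ℕ => m.sum fun _ e => e) '' ↑g.support) := by
  have hsf := MvPolynomial.support_nonempty.mpr hf
  have hsg := MvPolynomial.support_nonempty.mpr hg
  have henv : ∀ c : ℝ,
      f.support.sup' hsf (fun m => T.val (f.coeff m) + c * (m.sum fun _ e => e))
        = g.support.sup' hsg (fun m => T.val (g.coeff m) + c * (m.sum fun _ e => e)) := by
    intro c
    rw [← (TAux.eval_const_val f hf c).2, ← (TAux.eval_const_val g hg c).2,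
      h (fun _ => T.tang c)]
  have henv' : ∀ c : ℝ,
      g.support.sup' hsg (fun m => T.val (g.coeff m) + c * (m.sum fun _ e => e))
        = f.support.sup' hsf (fun m => T.val (f.coeff m) + c * (m.sum fun _ e => e)) :=
    fun c => (henv c).symm
  constructor
  · have h1 := TAux.env_sup_le f.support g.support hsf hsg _ _ _ _ henv
    have h2 := TAux.env_sup_le g.support f.support hsg hsf _ _ _ _ henv'
    rw [MvPolynomial.totalDegree, MvPolynomial.totalDegree,
      ← Finset.sup'_eq_sup hsf, ← Finset.sup'_eq_sup hsg]
    exact le_antisymm h1 h2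
  · have h1 := TAux.env_inf_le f.support g.support hsf hsg _ _ _ _ henv
    have h2 := TAux.env_inf_le g.support f.support hsg hsf _ _ _ _ henv'
    rw [TAux.sInf_image_eq_inf' f.support hsf, TAux.sInf_image_eq_inf' g.support hsg]
    exact le_antisymm h1 h2
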